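/- Let a_{m₁}, a_{m₂} ∈ ℝ² with a_{m₁} ≠ a_{m₂}, and let y_{m₁} ≥ y_{m₂} ≥ 0. Define E = {x ∈ ℝ² : |y_{m₁} − ‖x − a_{m₁}‖| = |y_{m₂} − ‖x − a_{m₂}‖|}, the mean anchor ā = (a_{m₁} + a_{m₂})/2, constants c = ‖a_{m₂} − ā‖, k_E = y_{m₁} + y_{m₂}, k_H = y_{m₁} − y_{m₂}, and let R be the 2×2 rotation matrix by the polar angle θ* of the vector a_{m₂} − ā. Then: (i) if 2c < k_H, E = ā + R·𝓔(c, k_E); (ii) if 2c > k_E, E = ā + R·𝓗₊(c, k_H); (iii) if k_H ≤ 2c ≤ k_E, E = ā + R·(𝓔(c, k_E) ∪ 𝓗₊(c, k_H)), where ā + R·A denotes the image of A under the map x ↦ ā + Rx. -/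

import Mathlib

/-- The plane `ℝ²` as a Euclidean space. -/
abbrev Plane : Type := EuclideanSpace ℝ (Fin 2)

/-- A point of the plane from two coordinates. -/
noncomputable def pt (s t : ℝ) : Plane := WithLp.toLp 2 ![s, t]

/-- The standard ellipse with focal points `(−c, 0)`, `(c, 0)` and string length `k`. -/
noncomputable def stdEllipse (c k : ℝ) : Set Plane :=
  {x | ‖x - pt (-c) 0‖ + ‖x - pt c 0‖ = k}

/-- The standard half-hyperbola with focal points `(−c, 0)`, `(c, 0)` and constant `k`. -/
noncomputable def stdHalfHyperbola (c k : ℝ) : Set Plane :=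
  {x | ‖x - pt (-c) 0‖ - ‖x - pt c 0‖ = k}

/-- Rotation of the plane by angle `θ`. -/
noncomputable def rot (θ : ℝ) (x : Plane) : Plane :=
  pt (Real.cos θ * x 0 - Real.sin θ * x 1) (Real.sin θ * x 0 + Real.cos θ * x 1)

lemma plane_ext {x y : Plane} (h0 : x 0 = y 0) (h1 : x 1 = y 1) : x = y := by
  apply PiLp.ext; intro i; fin_cases i <;> assumption

lemma norm_plane (x : Plane) : ‖x‖ = Real.sqrt ((x 0)^2 + (x 1)^2) := by
  rw [EuclideanSpace.norm_eq]; simp [Fin.sum_univ_two, sq_abs]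

lemma norm_rot (θ : ℝ) (x : Plane) : ‖rot θ x‖ = ‖x‖ := by
  rw [norm_plane, norm_plane]
  congr 1
  have h := Real.sin_sq_add_cos_sq θ
  show (Real.cos θ * x 0 - Real.sin θ * x 1)^2 + (Real.sin θ * x 0 + Real.cos θ * x 1)^2
      = (x 0)^2 + (x 1)^2
  nlinarith [h]

lemma rot_sub (θ : ℝ) (x y : Plane) : rot θ (x - y) = rot θ x - rot θ y := by
  apply plane_ext <;> show _ = _ <;>
    simp [rot, pt] <;> ring

lemma rot_rot_neg (θ : ℝ) (x : Plane) : rot θ (rot (-θ) x) = x := by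
  have h := Real.sin_sq_add_cos_sq θ
  apply plane_ext
  · simp [rot, pt]; linear_combination x 0 * h
  · simp [rot, pt]; linear_combination x 1 * h

lemma rot_neg_c (θ c : ℝ) : rot θ (pt (-c) 0) = -(c • pt (Real.cos θ) (Real.sin θ)) := by
  apply plane_ext <;> simp [rot, pt] <;> ring

lemma rot_pos_c (θ c : ℝ) : rot θ (pt c 0) = c • pt (Real.cos θ) (Real.sin θ) := by
  apply plane_ext <;> simp [rot, pt] <;> ring

lemma focal_dist (c : ℝ) (hc : 0 ≤ c) : ‖pt (-c) 0 - pt c 0‖ = 2 * c := by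
  rw [norm_plane]
  show Real.sqrt ((-c - c)^2 + (0 - 0)^2) = 2 * c
  rw [show (-c - c)^2 + (0-0)^2 = (2*c)^2 by ring]
  exact Real.sqrt_sq (by linarith)

/-- the equal-deviation set `E` is, up to the translation by the mean
anchor `ā` and the rotation by the polar angle of `a₂ − ā`, a standard ellipse, a
standard half-hyperbola, or the union of both, according to the size of `2c`. -/
theorem equal_deviation_set_characterization
    (a₁ a₂ : Plane) (hne : a₁ ≠ a₂) (y₁ y₂ : ℝ) (hy₂ : 0 ≤ y₂) (hy : y₂ ≤ y₁)
    (E : Set Plane) (hE : E = {x | |y₁ - ‖x - a₁‖| = |y₂ - ‖x - a₂‖|})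
    (abar : Plane) (habar : abar = (2⁻¹ : ℝ) • (a₁ + a₂))
    (c kE kH : ℝ) (hc : c = ‖a₂ - abar‖) (hkE : kE = y₁ + y₂) (hkH : kH = y₁ - y₂)
    (θ : ℝ) (hθ : a₂ - abar = c • pt (Real.cos θ) (Real.sin θ)) :
    (2 * c < kH → E = (fun v => abar + rot θ v) '' stdEllipse c kE) ∧
    (kE < 2 * c → E = (fun v => abar + rot θ v) '' stdHalfHyperbola c kH) ∧
    (kH ≤ 2 * c → 2 * c ≤ kE →
      E = (fun v => abar + rot θ v) '' (stdEllipse c kE ∪ stdHalfHyperbola c kH)) := by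
  have hc0 : 0 ≤ c := hc ▸ norm_nonneg _
  have ha1 : a₁ - abar = -(a₂ - abar) := by rw [habar]; module
  -- distances transform correctly under the rigid motion
  have hd1 : ∀ v : Plane, ‖(abar + rot θ v) - a₁‖ = ‖v - pt (-c) 0‖ := by
    intro v
    have : (abar + rot θ v) - a₁ = rot θ (v - pt (-c) 0) := by
      rw [rot_sub, rot_neg_c, ← hθ, ← ha1]; abel
    rw [this, norm_rot]
  have hd2 : ∀ v : Plane, ‖(abar + rot θ v) - a₂‖ = ‖v - pt c 0‖ := by
    intro v
    have : (abar + rot θ v) - a₂ = rot θ (v - pt c 0) := by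
      rw [rot_sub, rot_pos_c, ← hθ]; abel
    rw [this, norm_rot]
  -- the main set identity
  have hmain : E = (fun v => abar + rot θ v) '' (stdEllipse c kE ∪ stdHalfHyperbola c kH) := by
    rw [hE]
    ext x
    constructor
    · rintro hx
      have hx' : |y₁ - ‖x - a₁‖| = |y₂ - ‖x - a₂‖| := hx
      refine ⟨rot (-θ) (x - abar), ?_, ?_⟩
      swap
      · show abar + rot θ (rot (-θ) (x - abar)) = x
        rw [rot_rot_neg]; abel
      · have hxv : abar + rot θ (rot (-θ) (x - abar)) = x := by rw [rot_rot_neg]; abel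
        set v := rot (-θ) (x - abar) with hv
        have e1 : ‖x - a₁‖ = ‖v - pt (-c) 0‖ := by rw [← hxv]; exact hd1 v
        have e2 : ‖x - a₂‖ = ‖v - pt c 0‖ := by rw [← hxv]; exact hd2 v
        rw [abs_eq_abs] at hx'
        rcases hx' with h | h
        · right
          show ‖v - pt (-c) 0‖ - ‖v - pt c 0‖ = kH
          rw [← e1, ← e2, hkH]; linarith
        · left
          show ‖v - pt (-c) 0‖ + ‖v - pt c 0‖ = kE
          rw [← e1, ← e2, hkE]; linarith
    · rintro ⟨v, hv, rfl⟩
      show |y₁ - ‖(abar + rot θ v) - a₁‖| = |y₂ - ‖(abar + rot θ v) - a₂‖|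
      rw [hd1 v, hd2 v, abs_eq_abs]
      rcases hv with h | h
      · have : ‖v - pt (-c) 0‖ + ‖v - pt c 0‖ = kE := h
        right; rw [hkE] at this; linarith
      · have : ‖v - pt (-c) 0‖ - ‖v - pt c 0‖ = kH := h
        left; rw [hkH] at this; linarith
  refine ⟨?_, ?_, fun _ _ => hmain⟩
  · intro hlt
    have hemp : stdHalfHyperbola c kH = ∅ := by
      ext v
      simp only [Set.mem_empty_iff_false, iff_false]
      intro hv
      have hv' : ‖v - pt (-c) 0‖ - ‖v - pt c 0‖ = kH := hv
      have := abs_norm_sub_norm_le (v - pt (-c) 0) (v - pt c 0)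
      rw [show (v - pt (-c) 0) - (v - pt c 0) = -(pt (-c) 0 - pt c 0) by abel,
        norm_neg, focal_dist c hc0] at this
      have := abs_le.1 this
      linarith [this.2]
    rw [hmain, hemp, Set.union_empty]
  · intro hlt
    have hemp : stdEllipse c kE = ∅ := by
      ext v
      simp only [Set.mem_empty_iff_false, iff_false]
      intro hv
      have hv' : ‖v - pt (-c) 0‖ + ‖v - pt c 0‖ = kE := hv
      have h2 : ‖pt (-c) 0 - pt c 0‖ ≤ ‖v - pt c 0‖ + ‖v - pt (-c) 0‖ := by
        calc ‖pt (-c) 0 - pt c 0‖ = ‖(v - pt c 0) - (v - pt (-c) 0)‖ := by congr 1; abel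
        _ ≤ _ := norm_sub_le _ _
      rw [focal_dist c hc0] at h2
      linarith
    rw [hmain, hemp, Set.empty_union]
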